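/- Let l : 2^V → ℝ be submodular with l(∅) = 0 and l(A) ≥ 0 for all A ⊆ V. Then the Lovász hinge (general case) L2_l is a convex function on ℝ^p and is an extension of l, i.e. L2_l(1_A) = l(A) for every A ⊆ V. -/

import Mathlib

open Finset

/-- The chain {σ₁,…,σⱼ}: the image under σ of the first j indices. -/
def chainSet {p : ℕ} (σ : Equiv.Perm (Fin p)) (j : ℕ) : Finset (Fin p) :=
  (Finset.univ.filter fun k : Fin p => (k : ℕ) < j).image σ

/-- G_l(σ, s) = Σ_{j=1}^p s_{σ_j}·(l({σ₁,…,σⱼ}) − l({σ₁,…,σ_{j−1}})). -/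
def lovaszSum {p : ℕ} (l : Finset (Fin p) → ℝ) (σ : Equiv.Perm (Fin p))
    (s : Fin p → ℝ) : ℝ :=
  ∑ j : Fin p, s (σ j) * (l (chainSet σ ((j : ℕ) + 1)) - l (chainSet σ (j : ℕ)))

/-- Indicator vector 1_A ∈ {0,1}^p of A ⊆ V. -/
def indic {p : ℕ} (A : Finset (Fin p)) : Fin p → ℝ := fun i => if i ∈ A then 1 else 0

/-- A permutation sorting s in decreasing order: s_{π_1} ≥ … ≥ s_{π_p}. -/
def SortsDesc {p : ℕ} (π : Equiv.Perm (Fin p)) (s : Fin p → ℝ) : Prop :=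
  ∀ j k : Fin p, j ≤ k → s (π k) ≤ s (π j)

/-- A canonical permutation sorting s in decreasing order. -/
noncomputable def sortDesc {p : ℕ} (s : Fin p → ℝ) : Equiv.Perm (Fin p) :=
  Tuple.sort (fun i => -s i)

/-- The Lovász extension ℓ̂(s) = G_l(π, s) for a permutation π sorting s
decreasingly (independent of the choice of such π). -/
noncomputable def lovaszExt {p : ℕ} (l : Finset (Fin p) → ℝ) (s : Fin p → ℝ) : ℝ :=
  lovaszSum l (sortDesc s) s

/-- Submodularity: l(A) + l(B) ≥ l(A ∪ B) + l(A ∩ B). -/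
def Submodular {p : ℕ} (l : Finset (Fin p) → ℝ) : Prop :=
  ∀ A B : Finset (Fin p), l (A ∪ B) + l (A ∩ B) ≤ l A + l B

/-- The slack-rescaling surrogate S_l(s) = max_{I⊆V} l(I)·(1 − 2 Σ_{i∈I}(1 − s_i)). -/
noncomputable def slackSur {p : ℕ} (l : Finset (Fin p) → ℝ) (s : Fin p → ℝ) : ℝ :=
  Finset.univ.sup' Finset.univ_nonempty
    (fun I : Finset (Fin p) => l I * (1 - 2 * ∑ i ∈ I, (1 - s i)))

/-- The margin-rescaling surrogate M_l(s) = max_{I⊆V} ( l(I) − 2 Σ_{i∈I}(1 − s_i) ). -/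
noncomputable def marginSur {p : ℕ} (l : Finset (Fin p) → ℝ) (s : Fin p → ℝ) : ℝ :=
  Finset.univ.sup' Finset.univ_nonempty
    (fun I : Finset (Fin p) => l I - 2 * ∑ i ∈ I, (1 - s i))

/-- The Lovász hinge, general (non-monotonic) case. -/
noncomputable def hingeGen {p : ℕ} (l : Finset (Fin p) → ℝ) (s : Fin p → ℝ) : ℝ :=
  Finset.univ.sup' Finset.univ_nonempty
    (fun σ : Equiv.Perm (Fin p) => max 0 (lovaszSum l σ s))

/-- The Lovász hinge, increasing case (componentwise thresholding). -/
noncomputable def hingeInc {p : ℕ} (l : Finset (Fin p) → ℝ) (s : Fin p → ℝ) : ℝ :=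
  Finset.univ.sup' Finset.univ_nonempty
    (fun σ : Equiv.Perm (Fin p) =>
      ∑ j : Fin p, max (s (σ j)) 0 *
        (l (chainSet σ ((j : ℕ) + 1)) - l (chainSet σ (j : ℕ))))

lemma chainSet_zero {p : ℕ} (σ : Equiv.Perm (Fin p)) : chainSet σ 0 = ∅ := by
  simp [chainSet]

lemma chainSet_full {p : ℕ} (σ : Equiv.Perm (Fin p)) : chainSet σ p = univ := by
  have : (Finset.univ.filter fun k : Fin p => (k : ℕ) < p) = univ := by
    ext k; simp [k.isLt]
  rw [chainSet, this]
  exact Finset.image_univ_equiv σ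

lemma chainSet_succ {p : ℕ} (σ : Equiv.Perm (Fin p)) (j : Fin p) :
    chainSet σ ((j : ℕ) + 1) = insert (σ j) (chainSet σ (j : ℕ)) := by
  have h : (Finset.univ.filter fun k : Fin p => (k : ℕ) < (j : ℕ) + 1)
      = insert j (Finset.univ.filter fun k : Fin p => (k : ℕ) < (j : ℕ)) := by
    ext k
    simp [Nat.lt_succ_iff_lt_or_eq, Fin.ext_iff, or_comm]
    simp only [Fin.le_def, Fin.lt_def]; omega
  rw [chainSet, h, Finset.image_insert]; rfl

lemma not_mem_chainSet {p : ℕ} (σ : Equiv.Perm (Fin p)) (j : Fin p) :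
    σ j ∉ chainSet σ (j : ℕ) := by
  simp only [chainSet, Finset.mem_image, Finset.mem_filter, Finset.mem_univ, true_and]
  rintro ⟨k, hk, hkj⟩
  have : k = j := σ.injective hkj
  subst this; omega

lemma chainSet_mono {p : ℕ} (σ : Equiv.Perm (Fin p)) {j k : ℕ} (h : j ≤ k) :
    chainSet σ j ⊆ chainSet σ k := by
  apply Finset.image_subset_image
  intro x; simp only [Finset.mem_filter, Finset.mem_univ, true_and]; omega

lemma tel {p : ℕ} (f : ℕ → ℝ) :
    ∑ j : Fin p, (f ((j : ℕ) + 1) - f (j : ℕ)) = f p - f 0 := by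
  rw [Fin.sum_univ_eq_sum_range (fun j => f (j + 1) - f j) p]
  exact Finset.sum_range_sub f p

lemma lovaszSum_indic_le {p : ℕ} {l : Finset (Fin p) → ℝ} (hsub : Submodular l)
    (h0 : l ∅ = 0) (σ : Equiv.Perm (Fin p)) (A : Finset (Fin p)) :
    lovaszSum l σ (indic A) ≤ l A := by
  have key : ∀ j : Fin p,
      indic A (σ j) * (l (chainSet σ ((j : ℕ) + 1)) - l (chainSet σ (j : ℕ)))
        ≤ l (chainSet σ ((j : ℕ) + 1) ∩ A) - l (chainSet σ (j : ℕ) ∩ A) := by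
    intro j
    set C := chainSet σ (j : ℕ) with hC
    have hins := chainSet_succ σ j
    have hnot := not_mem_chainSet σ j
    by_cases h : σ j ∈ A
    · have h1 : chainSet σ ((j : ℕ) + 1) ∩ A = insert (σ j) (C ∩ A) := by
        rw [hins, Finset.insert_inter_of_mem h]
      have h2 : C ∪ insert (σ j) (C ∩ A) = chainSet σ ((j : ℕ) + 1) := by
        rw [hins]
        ext x; simp only [Finset.mem_union, Finset.mem_insert, Finset.mem_inter]
        tauto
      have h3 : C ∩ insert (σ j) (C ∩ A) = C ∩ A := by
        ext x; simp only [Finset.mem_inter, Finset.mem_insert]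
        constructor
        · rintro ⟨hx, hx' | hx'⟩
          · exact absurd (hx' ▸ hx) hnot
          · exact hx'
        · tauto
      have := hsub C (insert (σ j) (C ∩ A))
      rw [h2, h3] at this
      simp only [indic, h, if_pos, one_mul]
      rw [h1]
      linarith
    · have h1 : chainSet σ ((j : ℕ) + 1) ∩ A = C ∩ A := by
        rw [hins, Finset.insert_inter_of_notMem h]
      simp [indic, h, h1]
  calc lovaszSum l σ (indic A)
      ≤ ∑ j : Fin p, (l (chainSet σ ((j : ℕ) + 1) ∩ A) - l (chainSet σ (j : ℕ) ∩ A)) :=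
        Finset.sum_le_sum fun j _ => key j
    _ = l (chainSet σ p ∩ A) - l (chainSet σ 0 ∩ A) := tel fun n => l (chainSet σ n ∩ A)
    _ = l A := by rw [chainSet_full, chainSet_zero]; simp [h0]

lemma exists_aligned {p : ℕ} (A : Finset (Fin p)) :
    ∃ σ : Equiv.Perm (Fin p), chainSet σ A.card = A := by
  classical
  set m := A.card with hm
  set B : Finset (Fin p) := Finset.univ.filter fun k : Fin p => (k : ℕ) < m with hB
  have hmp : m ≤ p := by
    have := A.card_le_univ
    simpa [Fintype.card_fin] using this
  have hBcard : B.card = m := by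
    have : B = (Finset.univ : Finset (Fin m)).map
        ⟨Fin.castLE hmp, Fin.castLE_injective hmp⟩ := by
      ext x
      simp only [hB, Finset.mem_filter, Finset.mem_univ, true_and, Finset.mem_map,
        Function.Embedding.coeFn_mk]
      constructor
      · intro hx; exact ⟨⟨(x : ℕ), hx⟩, by ext; simp [Fin.castLE]⟩
      · rintro ⟨i, rfl⟩; simp [Fin.castLE]
    rw [this]; simp
  have hcc : Fintype.card {x // x ∈ B} = Fintype.card {x // x ∈ A} := by
    simp [Fintype.card_coe, hBcard]; exact hm
  have hcc' : Fintype.card {x // x ∉ B} = Fintype.card {x // x ∉ A} := by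
    have h1 := Fintype.card_subtype_compl (fun x => x ∈ B)
    have h2 := Fintype.card_subtype_compl (fun x => x ∈ A)
    rw [h1, h2, hcc]
  let e : {x // x ∈ B} ≃ {x // x ∈ A} := Fintype.equivOfCardEq hcc
  let σ : Equiv.Perm (Fin p) := e.extendSubtype
  refine ⟨σ, ?_⟩
  have hmemσ : ∀ x ∈ B, σ x ∈ A := fun x hx => e.extendSubtype_mem x hx
  have hsub : chainSet σ m ⊆ A := by
    intro y hy
    simp only [chainSet, Finset.mem_image, Finset.mem_filter, Finset.mem_univ,
      true_and] at hy
    obtain ⟨k, hk, rfl⟩ := hy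
    exact hmemσ k (by simp [hB, hk])
  apply Finset.eq_of_subset_of_card_le hsub
  have : (chainSet σ m).card = B.card := by
    rw [chainSet]
    rw [Finset.card_image_of_injective _ σ.injective]
  rw [hm] at *
  rw [this, hBcard]

lemma lovaszSum_indic_eq {p : ℕ} (l : Finset (Fin p) → ℝ) (h0 : l ∅ = 0)
    {σ : Equiv.Perm (Fin p)} {A : Finset (Fin p)} (hσ : chainSet σ A.card = A) :
    lovaszSum l σ (indic A) = l A := by
  set m := A.card with hm
  have key : ∀ j : Fin p,
      indic A (σ j) * (l (chainSet σ ((j : ℕ) + 1)) - l (chainSet σ (j : ℕ)))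
        = l (chainSet σ ((j : ℕ) + 1) ∩ A) - l (chainSet σ (j : ℕ) ∩ A) := by
    intro j
    by_cases h : (j : ℕ) < m
    · have hj1 : (j : ℕ) + 1 ≤ m := h
      have hsub1 : chainSet σ ((j : ℕ) + 1) ⊆ A := hσ ▸ chainSet_mono σ hj1
      have hsub0 : chainSet σ (j : ℕ) ⊆ A := hσ ▸ chainSet_mono σ (le_of_lt h)
      have hmem : σ j ∈ A := hsub1 (by rw [chainSet_succ]; exact Finset.mem_insert_self _ _)
      rw [Finset.inter_eq_left.mpr hsub1, Finset.inter_eq_left.mpr hsub0]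
      simp [indic, hmem]
    · have hAsub : A ⊆ chainSet σ (j : ℕ) := hσ ▸ chainSet_mono σ (le_of_not_gt h)
      have hne : σ j ∉ A := fun hx => not_mem_chainSet σ j (hAsub hx)
      have h1 : chainSet σ ((j : ℕ) + 1) ∩ A = A :=
        Finset.inter_eq_right.mpr (hAsub.trans (chainSet_mono σ (Nat.le_succ _)))
      have h0' : chainSet σ (j : ℕ) ∩ A = A := Finset.inter_eq_right.mpr hAsub
      simp [indic, hne, h1, h0']
  calc lovaszSum l σ (indic A)
      = ∑ j : Fin p, (l (chainSet σ ((j : ℕ) + 1) ∩ A) - l (chainSet σ (j : ℕ) ∩ A)) :=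
        Finset.sum_congr rfl fun j _ => key j
    _ = l (chainSet σ p ∩ A) - l (chainSet σ 0 ∩ A) := tel fun n => l (chainSet σ n ∩ A)
    _ = l A := by rw [chainSet_full, chainSet_zero]; simp [h0]

lemma lovaszSum_linear {p : ℕ} (l : Finset (Fin p) → ℝ) (σ : Equiv.Perm (Fin p))
    (x y : Fin p → ℝ) (a b : ℝ) :
    lovaszSum l σ (a • x + b • y) = a * lovaszSum l σ x + b * lovaszSum l σ y := by
  simp only [lovaszSum, Pi.add_apply, Pi.smul_apply, smul_eq_mul, Finset.mul_sum,
    ← Finset.sum_add_distrib]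
  exact Finset.sum_congr rfl fun j _ => by ring

/-- for submodular nonnegative l with l(∅)=0, the Lovász hinge
(general case) is convex on ℝ^p and is an extension of l. -/
theorem hingeGen_convex_and_extension (p : ℕ) (hp : 1 ≤ p)
    (l : Finset (Fin p) → ℝ) (hsub : Submodular l) (h0 : l ∅ = 0)
    (hnn : ∀ A : Finset (Fin p), 0 ≤ l A) :
    ConvexOn ℝ Set.univ (hingeGen l) ∧
      ∀ A : Finset (Fin p), hingeGen l (indic A) = l A := by
  constructor
  · refine ⟨convex_univ, fun x _ y _ a b ha hb _ => ?_⟩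
    simp only [smul_eq_mul]
    have key : ∀ σ : Equiv.Perm (Fin p),
        max 0 (lovaszSum l σ (a • x + b • y)) ≤ a * hingeGen l x + b * hingeGen l y := by
      intro σ
      have hx : max 0 (lovaszSum l σ x) ≤ hingeGen l x :=
        Finset.le_sup' (fun τ : Equiv.Perm (Fin p) => max 0 (lovaszSum l τ x))
          (Finset.mem_univ σ)
      have hy : max 0 (lovaszSum l σ y) ≤ hingeGen l y :=
        Finset.le_sup' (fun τ : Equiv.Perm (Fin p) => max 0 (lovaszSum l τ y))
          (Finset.mem_univ σ)
      calc max 0 (lovaszSum l σ (a • x + b • y))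
          = max 0 (a * lovaszSum l σ x + b * lovaszSum l σ y) := by
            rw [lovaszSum_linear]
        _ ≤ a * max 0 (lovaszSum l σ x) + b * max 0 (lovaszSum l σ y) := by
            apply max_le
            · exact add_nonneg (mul_nonneg ha (le_max_left _ _))
                (mul_nonneg hb (le_max_left _ _))
            · exact add_le_add (mul_le_mul_of_nonneg_left (le_max_right _ _) ha)
                (mul_le_mul_of_nonneg_left (le_max_right _ _) hb)
        _ ≤ a * hingeGen l x + b * hingeGen l y :=
            add_le_add (mul_le_mul_of_nonneg_left hx ha)
              (mul_le_mul_of_nonneg_left hy hb)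
    exact Finset.sup'_le _ _ fun σ _ => key σ
  · intro A
    obtain ⟨σ₀, hσ₀⟩ := exists_aligned A
    have heq := lovaszSum_indic_eq l h0 hσ₀
    apply le_antisymm
    · exact Finset.sup'_le _ _ fun σ _ =>
        max_le (hnn A) (lovaszSum_indic_le hsub h0 σ A)
    · have hA : l A = max 0 (lovaszSum l σ₀ (indic A)) := by
        rw [heq, max_eq_right (hnn A)]
      rw [hA]
      exact Finset.le_sup' (fun σ : Equiv.Perm (Fin p) => max 0 (lovaszSum l σ (indic A)))
        (Finset.mem_univ σ₀)
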